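/- Let H be a Hermitian matrix with no zero eigenvalues and T = exp(−H). Then the limit as L → ∞ of (1 − T^L)(1 + T^L)⁻¹ equals ε(H) = H(H²)^{−1/2}, the sign function of H. -/

import Mathlib

open Matrix Filter
open scoped ComplexOrder

/-- The square root of a positive semidefinite matrix (Mathlib's removed `PosSemidef.sqrt`,
restated with its old definition). -/
noncomputable def Matrix.PosSemidef.sqrt {m 𝕜 : Type*} [Fintype m] [DecidableEq m] [RCLike 𝕜]
    {A : Matrix m m 𝕜} (hA : A.PosSemidef) : Matrix m m 𝕜 :=
  hA.1.eigenvectorUnitary.1 * diagonal ((↑) ∘ Real.sqrt ∘ hA.1.eigenvalues) *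
    (star hA.1.eigenvectorUnitary : Matrix m m 𝕜)

open scoped MatrixOrder in
theorem Matrix.PosSemidef.eq_sqrt_of_sq_eq {m 𝕜 : Type*} [Fintype m] [DecidableEq m] [RCLike 𝕜]
    {A B : Matrix m m 𝕜} (hB : B.PosSemidef) (hA : A.PosSemidef)
    (hAB : B ^ 2 = A) : B = hA.sqrt := by
  have h1 : hA.sqrt = CFC.sqrt A := by
    rw [CFC.sqrt_eq_cfc, cfc_nnreal_eq_real _ A, hA.1.cfc_eq]
    simp only [IsHermitian.cfc, Matrix.PosSemidef.sqrt, Unitary.conjStarAlgAut_apply]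
    congr 2
    congr 1
    funext i
    simp [Real.coe_toNNReal', max_eq_left (hA.eigenvalues_nonneg i)]
  rw [h1]
  exact (CFC.sqrt_unique (by rw [← sq]; exact hAB) hB.nonneg).symm

/-- For H an n×n Hermitian matrix with no zero eigenvalues and T = exp(−H),
(1 − T^L)(1 + T^L)⁻¹ tends, as L → ∞, to the sign function
ε(H) = H (H²)^(−1/2) of H (here H² = Hᴴ H since H is Hermitian). -/
theorem stmt16 {n : ℕ} (H : Matrix (Fin n) (Fin n) ℂ)
    (hH : H.IsHermitian) (heig : ∀ i, hH.eigenvalues i ≠ 0) :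
    Tendsto
      (fun L : ℕ =>
        (1 - (NormedSpace.exp (-H)) ^ L) * (1 + (NormedSpace.exp (-H)) ^ L)⁻¹)
      atTop
      (nhds (H * ((posSemidef_conjTranspose_mul_self H).sqrt)⁻¹)) := by
  classical
  set U : Matrix (Fin n) (Fin n) ℂ := (hH.eigenvectorUnitary : Matrix (Fin n) (Fin n) ℂ) with hUdef
  have hU1 : star U * U = 1 := Unitary.coe_star_mul_self _
  have hU2 : U * star U = 1 := Unitary.coe_mul_star_self _
  have hUunit : IsUnit U := (Unitary.toUnits hH.eigenvectorUnitary).isUnit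
  have hUinv : U⁻¹ = star U := Matrix.inv_eq_left_inv hU1
  set Φ : Matrix (Fin n) (Fin n) ℂ → Matrix (Fin n) (Fin n) ℂ :=
    fun A => U * A * star U with hΦ
  have hone : Φ 1 = 1 := by simp only [hΦ, mul_one]; exact hU2
  have hmul : ∀ A B, Φ A * Φ B = Φ (A * B) := by
    intro A B
    simp only [hΦ, mul_assoc]
    rw [← mul_assoc (star U) U, hU1, one_mul]
  have hpow : ∀ (A : Matrix (Fin n) (Fin n) ℂ) (L : ℕ), Φ A ^ L = Φ (A ^ L) := by
    intro A L
    induction L with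
    | zero => simp [hone]
    | succ L ih => rw [pow_succ, ih, hmul, ← pow_succ]
  have hdiaginv : ∀ (v : Fin n → ℂ), (∀ i, v i ≠ 0) →
      (Φ (diagonal v))⁻¹ = Φ (diagonal fun i => (v i)⁻¹) := by
    intro v hv
    refine Matrix.inv_eq_left_inv ?_
    rw [hmul, diagonal_mul_diagonal]
    have : (fun i => (v i)⁻¹ * v i) = fun _ => (1 : ℂ) := by
      funext i; exact inv_mul_cancel₀ (hv i)
    rw [this, diagonal_one, hone]
  set ev : Fin n → ℝ := hH.eigenvalues with hevdef
  have hspec : H = Φ (diagonal fun i => (ev i : ℂ)) := hH.spectral_theorem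
  set e : Fin n → ℝ := fun i => Real.exp (-ev i) with hedef
  have hepos : ∀ i, 0 < e i := fun i => Real.exp_pos _
  -- exp(-H)
  have hT : NormedSpace.exp (-H) = Φ (diagonal fun i => (e i : ℂ)) := by
    have hneg : -H = Φ (diagonal fun i => -(ev i : ℂ)) := by
      rw [hspec]
      simp only [hΦ, ← diagonal_neg, neg_mul, mul_neg]
    rw [hneg]
    simp only [hΦ, ← hUinv]
    rw [Matrix.exp_conj U _ hUunit, Matrix.exp_diagonal, Pi.exp_def]
    congr 1
    funext i
    simp [← Complex.exp_eq_exp_ℂ, ← Complex.ofReal_neg, ← Complex.ofReal_exp]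
    rfl
  have hTL : ∀ L : ℕ, (NormedSpace.exp (-H)) ^ L
      = Φ (diagonal fun i => ((e i : ℂ)) ^ L) := by
    intro L
    rw [hT, hpow, diagonal_pow]
    rfl
  set dvec : ℕ → Fin n → ℂ :=
    fun L i => (((1 - e i ^ L) / (1 + e i ^ L) : ℝ) : ℂ) with hdvec
  set svec : Fin n → ℂ := fun i => ((if 0 < ev i then (1 : ℝ) else -1) : ℂ) with hsvec
  have hne : ∀ L i, (1 : ℂ) + (e i : ℂ) ^ L ≠ 0 := by
    intro L i
    have : ((1 + e i ^ L : ℝ) : ℂ) ≠ 0 := by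
      rw [Complex.ofReal_ne_zero]
      positivity
    simpa using this
  -- the LHS as a conjugated diagonal
  have hfun : ∀ L : ℕ,
      (1 - (NormedSpace.exp (-H)) ^ L) * (1 + (NormedSpace.exp (-H)) ^ L)⁻¹
        = Φ (diagonal (dvec L)) := by
    intro L
    rw [hTL]
    have h1 : (1 : Matrix (Fin n) (Fin n) ℂ) - Φ (diagonal fun i => (e i : ℂ) ^ L)
        = Φ (diagonal fun i => 1 - (e i : ℂ) ^ L) := by
      simp only [hΦ, ← diagonal_one (n := Fin n), ← diagonal_sub]
      simp [mul_sub, sub_mul, hU2]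
    have h2 : (1 : Matrix (Fin n) (Fin n) ℂ) + Φ (diagonal fun i => (e i : ℂ) ^ L)
        = Φ (diagonal fun i => 1 + (e i : ℂ) ^ L) := by
      simp only [hΦ, ← diagonal_one (n := Fin n), ← diagonal_add]
      simp [mul_add, add_mul, hU2]
    rw [h1, h2, hdiaginv _ (hne L), hmul, diagonal_mul_diagonal]
    refine congrArg Φ (congrArg diagonal ?_)
    funext i
    simp only [hdvec]
    push_cast
    rw [div_eq_mul_inv]
  -- the RHS as a conjugated diagonal
  have habs : (posSemidef_conjTranspose_mul_self H).sqrt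
      = Φ (diagonal fun i => ((|ev i| : ℝ) : ℂ)) := by
    symm
    refine PosSemidef.eq_sqrt_of_sq_eq ?_ _ ?_
    · have hd : (diagonal fun i => ((|ev i| : ℝ) : ℂ)).PosSemidef := by
        refine posSemidef_diagonal_iff.mpr fun i => ?_
        exact Complex.zero_le_real.mpr (abs_nonneg (ev i))
      simpa only [hΦ, Matrix.star_eq_conjTranspose] using
        hd.mul_mul_conjTranspose_same U
    · rw [pow_two, hmul, diagonal_mul_diagonal, hH.eq, hspec, hmul,
        diagonal_mul_diagonal]
      refine congrArg Φ (congrArg diagonal ?_)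
      funext i
      exact_mod_cast congrArg (fun r : ℝ => (r : ℂ)) (abs_mul_abs_self (ev i))
  have habsne : ∀ i, ((|ev i| : ℝ) : ℂ) ≠ 0 := by
    intro i
    simpa [Complex.ofReal_ne_zero, abs_eq_zero] using heig i
  have hrhs : H * ((posSemidef_conjTranspose_mul_self H).sqrt)⁻¹ = Φ (diagonal svec) := by
    rw [habs, hdiaginv _ habsne]
    nth_rewrite 1 [hspec]
    rw [hmul, diagonal_mul_diagonal]
    refine congrArg Φ (congrArg diagonal ?_)
    funext i
    simp only [hsvec]
    have hcast : ((ev i : ℝ) : ℂ) * (((|ev i| : ℝ) : ℂ))⁻¹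
        = (((ev i / |ev i| : ℝ)) : ℂ) := by
      push_cast
      rw [div_eq_mul_inv]
    rw [hcast]
    rcases (heig i).lt_or_gt with hlt | hgt
    · rw [if_neg (not_lt.mpr hlt.le), abs_of_neg hlt, div_neg, div_self (heig i)]
      push_cast
      norm_num
    · rw [if_pos hgt, abs_of_pos hgt, div_self (heig i)]
  -- continuity of conjugation with a diagonal
  have hcont : Continuous (fun d : Fin n → ℂ => Φ (diagonal d)) := by
    simp only [hΦ]
    exact (continuous_const.matrix_mul continuous_id.matrix_diagonal).matrix_mul
      continuous_const
  -- pointwise convergence of the diagonal entries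
  have hdtend : Tendsto dvec atTop (nhds svec) := by
    rw [tendsto_pi_nhds]
    intro i
    simp only [hdvec, hsvec]
    have key : Tendsto (fun L : ℕ => (1 - e i ^ L) / (1 + e i ^ L)) atTop
        (nhds (if 0 < ev i then (1 : ℝ) else -1)) := by
      rcases (heig i).lt_or_gt with hlt | hgt
      · -- ev i < 0 : e i > 1, limit -1
        rw [if_neg (not_lt.mpr hlt.le)]
        have h1 : 1 < e i := Real.one_lt_exp_iff.mpr (by linarith)
        have h := tendsto_pow_atTop_atTop_of_one_lt h1
        have h2 : Tendsto (fun L : ℕ => -1 + 2 / (1 + e i ^ L)) atTop (nhds (-1)) := by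
          have := Tendsto.div_atTop (tendsto_const_nhds (x := (2 : ℝ)))
            (tendsto_atTop_add_const_left _ 1 h)
          simpa using (tendsto_const_nhds (x := (-1 : ℝ))).add this
        refine h2.congr fun L => ?_
        have hpos : 0 < 1 + e i ^ L := by positivity
        field_simp
        ring
      · -- ev i > 0 : e i < 1, limit 1
        rw [if_pos hgt]
        have h1 : e i < 1 := Real.exp_lt_one_iff.mpr (by linarith)
        have h := tendsto_pow_atTop_nhds_zero_of_lt_one (hepos i).le h1
        have := ((tendsto_const_nhds (x := (1 : ℝ))).sub h).div
          ((tendsto_const_nhds (x := (1 : ℝ))).add h) (by norm_num)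
        simpa [Pi.div_def] using this
    have := (Complex.continuous_ofReal.tendsto _).comp key
    simpa [Function.comp_def, apply_ite Complex.ofReal] using this
  rw [hrhs]
  exact Tendsto.congr (fun L => (hfun L).symm) ((hcont.tendsto svec).comp hdtend)
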